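/- Well-stitchedness of 3D Minkowski spacetime (Theorem 1): Let P₁, P₂, P₃, P₄, P₅, P₆, a, b, c, d, e, f be twelve pairwise distinct points of V satisfying the 23 stitching relations. Then f ⌣ P₆, i.e. q(f − P₆) = 0. -/

import Mathlib

noncomputable section

/-- Minkowski quadratic form on `ℝ³` with coordinates `(t, x, y)` indexed `0, 1, 2`. -/
def q (v : Fin 3 → ℝ) : ℝ := -(v 0)^2 + (v 1)^2 + (v 2)^2

/-- Polar bilinear form of `q`. -/
def mbil (v w : Fin 3 → ℝ) : ℝ := -(v 0) * (w 0) + (v 1) * (w 1) + (v 2) * (w 2)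

/-- The 23 stitching relations among twelve points. -/
def Stitch (P₁ P₂ P₃ P₄ P₅ P₆ a b c d e f : Fin 3 → ℝ) : Prop :=
  q (a - P₁) = 0 ∧ q (a - P₂) = 0 ∧ q (a - P₃) = 0 ∧ q (a - P₄) = 0 ∧
  q (b - P₁) = 0 ∧ q (b - P₂) = 0 ∧ q (b - P₃) = 0 ∧ q (b - P₄) = 0 ∧
  q (c - P₁) = 0 ∧ q (c - P₂) = 0 ∧ q (c - P₅) = 0 ∧ q (c - P₆) = 0 ∧
  q (d - P₁) = 0 ∧ q (d - P₂) = 0 ∧ q (d - P₅) = 0 ∧ q (d - P₆) = 0 ∧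
  q (e - P₃) = 0 ∧ q (e - P₄) = 0 ∧ q (e - P₅) = 0 ∧ q (e - P₆) = 0 ∧
  q (f - P₃) = 0 ∧ q (f - P₄) = 0 ∧ q (f - P₅) = 0


abbrev E3 := Fin 3 → ℝ
abbrev F5 := Fin 5 → ℝ

/-- Lift to the null quadric in ℝ⁵. -/
def lf (v : E3) : F5 := ![v 0, v 1, v 2, 1, q v]

/-- The ambient bilinear form on ℝ⁵. -/
def Bf : LinearMap.BilinForm ℝ F5 :=
  LinearMap.mk₂ ℝ (fun x y => -2*(x 0)*(y 0) + 2*(x 1)*(y 1) + 2*(x 2)*(y 2) - (x 3)*(y 4) - (x 4)*(y 3))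
    (by intros; simp [Pi.add_apply]; ring)
    (by intros; simp [Pi.smul_apply, smul_eq_mul]; ring)
    (by intros; simp [Pi.add_apply]; ring)
    (by intros; simp [Pi.smul_apply, smul_eq_mul]; ring)

lemma Bf_apply (x y : F5) :
    Bf x y = -2*(x 0)*(y 0) + 2*(x 1)*(y 1) + 2*(x 2)*(y 2) - (x 3)*(y 4) - (x 4)*(y 3) := rfl

lemma Bf_comm (x y : F5) : Bf x y = Bf y x := by simp [Bf_apply]; ring

lemma Bf_refl : Bf.IsRefl := fun x y h => by rwa [Bf_comm]

lemma Bf_lf (v w : E3) : Bf (lf v) (lf w) = -(q (v - w)) := by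
  simp [Bf_apply, lf, q, Pi.sub_apply]; ring

lemma Bf_nondeg : Bf.Nondegenerate := by
  refine (LinearMap.IsRefl.nondegenerate_iff_separatingLeft Bf_refl).mpr ?_
  intro x h
  have h0 := h ![1,0,0,0,0]
  have h1 := h ![0,1,0,0,0]
  have h2 := h ![0,0,1,0,0]
  have h3 := h ![0,0,0,1,0]
  have h4 := h ![0,0,0,0,1]
  simp [Bf_apply] at h0 h1 h2 h3 h4
  funext i
  fin_cases i <;> simp [h0, h1, h2, h3, h4] <;> linarith

lemma lf_inj {v w : E3} (h : lf v = lf w) : v = w := by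
  funext i
  fin_cases i
  · exact congrFun h 0
  · exact congrFun h 1
  · exact congrFun h 2

lemma lf_pair_indep {x y : E3} (hxy : x ≠ y) : LinearIndependent ℝ ![lf x, lf y] := by
  rw [LinearIndependent.pair_iff]
  intro s t hst
  have h3 := congrFun hst 3
  have h0 := congrFun hst 0
  have h1 := congrFun hst 1
  have h2 := congrFun hst 2
  simp [lf, Pi.add_apply, Pi.smul_apply, smul_eq_mul] at h3 h0 h1 h2
  have key : ∀ u v : ℝ, s * u + -s * v = 0 → s * (u - v) = 0 := by
    intro u v h; linear_combination h
  have hs : s = 0 := by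
    by_contra hs
    apply hxy
    have ht : t = -s := by linarith
    rw [ht] at h0 h1 h2
    funext i
    fin_cases i
    · have := mul_eq_zero.mp (key _ _ (by linarith : s * x 0 + -s * y 0 = 0))
      rcases this with h | h; · exact absurd h hs
      · simpa [sub_eq_zero] using h
    · have := mul_eq_zero.mp (key _ _ h1)
      rcases this with h | h; · exact absurd h hs
      · simpa [sub_eq_zero] using h
    · have := mul_eq_zero.mp (key _ _ h2)
      rcases this with h | h; · exact absurd h hs
      · simpa [sub_eq_zero] using h
  constructor
  · exact hs
  · rw [hs] at h3; linarith
open Module Submodule in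
lemma dep_of_perp {k m : ℕ} (hm : 5 - k < m) (hk : k ≤ 5) (w : Fin k → F5)
    (hw : LinearIndependent ℝ w) (v : Fin m → F5)
    (hperp : ∀ i j, Bf (w i) (v j) = 0) :
    ∃ g : Fin m → ℝ, (∑ j, g j • v j = 0) ∧ ∃ j, g j ≠ 0 := by
  set W : Submodule ℝ F5 := Submodule.span ℝ (Set.range w) with hW
  have hrank : finrank ℝ W = k := by
    rw [hW, finrank_span_eq_card hw, Fintype.card_fin]
  have horth : finrank ℝ (Bf.orthogonal W) = 5 - k := by
    rw [LinearMap.BilinForm.finrank_orthogonal Bf_nondeg, hrank,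
      Module.finrank_fin_fun]
  have hmem : ∀ j, v j ∈ Bf.orthogonal W := by
    intro j
    intro n hn
    have hsub : W ≤ LinearMap.ker (Bf.flip (v j)) := by
      rw [hW, Submodule.span_le, Set.range_subset_iff]
      intro i
      simp only [SetLike.mem_coe, LinearMap.mem_ker, LinearMap.flip_apply]
      exact hperp i j
    exact hsub hn
  set v' : Fin m → (Bf.orthogonal W) := fun j => ⟨v j, hmem j⟩ with hv'
  have hnotind : ¬ LinearIndependent ℝ v' := by
    intro hind
    have := hind.fintype_card_le_finrank
    rw [Fintype.card_fin, horth] at this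
    omega
  obtain ⟨g, hg, j, hj⟩ := Fintype.not_linearIndependent_iff.mp hnotind
  refine ⟨g, ?_, j, hj⟩
  have := congrArg (Subtype.val) hg
  simpa using this
lemma q_expand (x n : E3) (r : ℝ) :
    q (x - r • n) = q x - 2*r*(mbil x n) + r^2 * q n := by
  simp [q, mbil, Pi.sub_apply, Pi.smul_apply, smul_eq_mul]; ring

lemma q_sub_comm (x y : E3) : q (x - y) = q (y - x) := by
  simp [q, Pi.sub_apply]; ring

/-- A null vector orthogonal to a nonzero null vector is parallel to it. -/
lemma null_parallel {w n : E3} (hn : q n = 0) (hn0 : n ≠ 0) (hw : q w = 0)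
    (ho : mbil w n = 0) : ∃ t : ℝ, w = t • n := by
  have hQn : -(n 0)^2 + (n 1)^2 + (n 2)^2 = 0 := hn
  have hQw : -(w 0)^2 + (w 1)^2 + (w 2)^2 = 0 := hw
  have hO : -(w 0)*(n 0) + (w 1)*(n 1) + (w 2)*(n 2) = 0 := ho
  have hn0' : n 0 ≠ 0 := by
    intro h
    apply hn0
    have h1 : n 1 = 0 := by nlinarith
    have h2 : n 2 = 0 := by nlinarith
    funext i; fin_cases i <;> simp [h, h1, h2]
  have cross : (w 1 * n 2 - w 2 * n 1)^2 = 0 := by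
    linear_combination (n 1^2 + n 2^2) * hQw + (w 0)^2 * hQn - (w 1*n 1 + w 2*n 2 + w 0*n 0) * hO
  have cross' : w 1 * n 2 - w 2 * n 1 = 0 := by
    have := sq_eq_zero_iff.mp cross; exact this
  refine ⟨w 0 / n 0, ?_⟩
  have e1 : w 1 * (n 0)^2 = w 0 * n 0 * n 1 := by
    linear_combination (-(w 1)) * hQn + (n 1) * hO + (n 2) * cross'
  have e2 : w 2 * (n 0)^2 = w 0 * n 0 * n 2 := by
    linear_combination (-(w 2)) * hQn + (n 2) * hO - (n 1) * cross'
  funext i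
  fin_cases i <;> simp [Pi.smul_apply, smul_eq_mul]
  · field_simp
  · field_simp
    apply mul_right_cancel₀ hn0'
    linear_combination e1
  · field_simp
    apply mul_right_cancel₀ hn0'
    linear_combination e2

/-- Two light cones with lightlike-separated distinct vertices intersect in their common null line. -/
lemma on_line {x p n : E3} (hn : q n = 0) (hn0 : n ≠ 0) {s : ℝ} (hs : s ≠ 0)
    (h1 : q (x - p) = 0) (h2 : q (x - (p + s • n)) = 0) : ∃ t : ℝ, x = p + t • n := by
  have hrw : x - (p + s • n) = (x - p) - s • n := by abel
  rw [hrw, q_expand, h1, hn] at h2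
  have ho : mbil (x - p) n = 0 := by
    have : -2*s*(mbil (x-p) n) = 0 := by linarith
    rcases mul_eq_zero.mp this with h | h
    · exfalso; apply hs; rcases mul_eq_zero.mp h with h' | h'; · norm_num at h'
      · exact h'
    · exact h
  obtain ⟨t, ht⟩ := null_parallel hn hn0 h1 ho
  exact ⟨t, by rw [← ht]; abel⟩

/-- A point lightlike to two distinct points of a null line is lightlike to all its points. -/
lemma line_transfer {x p n : E3} (hn : q n = 0) {s : ℝ} (hs : s ≠ 0)
    (h1 : q (x - p) = 0) (h2 : q (x - (p + s • n)) = 0) (t : ℝ) :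
    q (x - (p + t • n)) = 0 := by
  have hrw : ∀ r : ℝ, x - (p + r • n) = (x - p) - r • n := fun r => by abel
  rw [hrw, q_expand, h1, hn] at h2
  have ho : mbil (x - p) n = 0 := by
    have : -2*s*(mbil (x-p) n) = 0 := by linarith
    rcases mul_eq_zero.mp this with h | h
    · exfalso; apply hs; rcases mul_eq_zero.mp h with h' | h'; · norm_num at h'
      · exact h'
    · exact h
  rw [hrw, q_expand, h1, hn, ho]; ring

lemma line_shift (p n : E3) (s t : ℝ) : p + t • n = (p + s • n) + (t - s) • n := by
  rw [sub_smul]; abel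

/-- Affine/null consequence of a linear relation among three lifts. -/
lemma lift_affine {x y z : E3} {s t : ℝ} (h : lf z = s • lf x + t • lf y) :
    (z = s • x + t • y) ∧ s + t = 1 ∧ s * t * (q (x - y)) = 0 := by
  have h0 := congrFun h 0
  have h1 := congrFun h 1
  have h2 := congrFun h 2
  have h3 := congrFun h 3
  have h4 := congrFun h 4
  simp [lf, Pi.add_apply, Pi.smul_apply, smul_eq_mul] at h0 h1 h2 h3 h4
  refine ⟨?_, by linarith, ?_⟩
  · funext i; fin_cases i <;> simp [Pi.add_apply, Pi.smul_apply, smul_eq_mul]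
    · exact h0
    · exact h1
    · exact h2
  · have hq : q z = s * q x + t * q y := h4
    simp only [q, Pi.sub_apply] at hq ⊢
    rw [h0, h1, h2] at hq
    nlinarith [hq, h3]
example (g : Fin 4 → ℝ) (u0 u1 u2 u3 : F5) (h : ∑ j, g j • ![u0,u1,u2,u3] j = 0) :
    g 0 • u0 + g 1 • u1 + g 2 • u2 + g 3 • u3 = 0 := by
  simpa [Fin.sum_univ_four] using h

example (g : Fin 3 → ℝ) (u0 u1 u2 : F5) (h : ∑ j, g j • ![u0,u1,u2] j = 0) :
    g 0 • u0 + g 1 • u1 + g 2 • u2 = 0 := by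
  simpa [Fin.sum_univ_three] using h

example (δ ε : Fin 3 → ℝ) (u1 u2 u3 u4 : F5)
    (h1 : δ 0 • u1 + δ 1 • u2 + δ 2 • u3 = 0)
    (h2 : ε 0 • u1 + ε 1 • u2 + ε 2 • u4 = 0) :
    (ε 1*δ 0 - δ 1*ε 0) • u1 + (ε 1*δ 2) • u3 + (-(δ 1*ε 2)) • u4 = 0 := by
  linear_combination (norm := module) (ε 1) • h1 - (δ 1) • h2

lemma pair4 {c0 c1 c2 c3 : ℝ} {u0 u1 u2 u3 : F5} (h : c0•u0+c1•u1+c2•u2+c3•u3 = 0) (x : F5) :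
    c0 * Bf x u0 + c1 * Bf x u1 + c2 * Bf x u2 + c3 * Bf x u3 = 0 := by
  have := congrArg (Bf x) h
  simpa [map_add, map_smul, smul_eq_mul] using this

lemma pair3 {c0 c1 c2 : ℝ} {u0 u1 u2 : F5} (h : c0•u0+c1•u1+c2•u2 = 0) (x : F5) :
    c0 * Bf x u0 + c1 * Bf x u1 + c2 * Bf x u2 = 0 := by
  have := congrArg (Bf x) h
  simpa [map_add, map_smul, smul_eq_mul] using this

lemma pair_zero {x y : E3} (hxy : x ≠ y) {s t : ℝ} (h : s • lf x + t • lf y = 0) :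
    s = 0 ∧ t = 0 := LinearIndependent.pair_iff.mp (lf_pair_indep hxy) s t h

lemma bz {x y : E3} (h : q (x - y) = 0) : Bf (lf x) (lf y) = 0 := by rw [Bf_lf, h, neg_zero]

lemma qz {x y : E3} (h : Bf (lf x) (lf y) = 0) : q (x - y) = 0 := by
  rw [Bf_lf] at h; linarith

lemma solve3 {u1 u2 u3 : F5} {c1 c2 c3 : ℝ} (h : c1 • u1 + c2 • u2 + c3 • u3 = 0) (hc3 : c3 ≠ 0) :
    u3 = (-(c1)/c3) • u1 + (-(c2)/c3) • u2 := by
  funext i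
  have h' := congrFun h i
  simp only [Pi.add_apply, Pi.smul_apply, smul_eq_mul, Pi.zero_apply] at h' ⊢
  field_simp
  linear_combination h'

lemma line_comp (p n : E3) (s t : ℝ) : (p + s•n) + t•n = p + (s+t)•n := by
  rw [add_smul]; abel

lemma lf_coord3 (x : E3) : lf x 3 = 1 := rfl
lemma fin4_ex {g : Fin 4 → ℝ} (h : ∃ j, g j ≠ 0) (h0 : g 0 = 0) (h1 : g 1 = 0)
    (h2 : g 2 = 0) (h3 : g 3 = 0) : False := by
  obtain ⟨j, hj⟩ := h; fin_cases j <;> simp_all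

lemma fin3_ex {g : Fin 3 → ℝ} (h : ∃ j, g j ≠ 0) (h0 : g 0 = 0) (h1 : g 1 = 0)
    (h2 : g 2 = 0) : False := by
  obtain ⟨j, hj⟩ := h; fin_cases j <;> simp_all

lemma line_eq (p n : E3) {s t u : ℝ} (h : s + t = u) : (p + s•n) + t•n = p + u•n := by
  rw [line_comp, h]
/-- Theorem 1: the 3D Minkowski spacetime is well-stitched. -/
theorem minkowski3_well_stitched
    (P₁ P₂ P₃ P₄ P₅ P₆ a b c d e f : Fin 3 → ℝ)
    (hdist : List.Pairwise (· ≠ ·) [P₁, P₂, P₃, P₄, P₅, P₆, a, b, c, d, e, f])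
    (hst : Stitch P₁ P₂ P₃ P₄ P₅ P₆ a b c d e f) :
    q (f - P₆) = 0 := by
  obtain ⟨haP1, haP2, haP3, haP4, hbP1, hbP2, hbP3, hbP4, hcP1, hcP2, hcP5, hcP6,
    hdP1, hdP2, hdP5, hdP6, heP3, heP4, heP5, heP6, hfP3, hfP4, hfP5⟩ := hst
  simp only [List.pairwise_cons, List.mem_cons, List.not_mem_nil, List.mem_singleton,
    forall_eq_or_imp, forall_eq, List.Pairwise.nil] at hdist
  obtain ⟨⟨h12,h13,h14,h15,h16,h1a,h1b,h1c,h1d,h1e,h1f⟩,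
    ⟨h23,h24,h25,h26,h2a,h2b,h2c,h2d,h2e,h2f⟩,
    ⟨h34,h35,h36,h3a,h3b,h3c,h3d,h3e,h3f⟩,
    ⟨h45,h46,h4a,h4b,h4c,h4d,h4e,h4f⟩,
    ⟨h56,h5a,h5b,h5c,h5d,h5e,h5f⟩,
    ⟨h6a,h6b,h6c,h6d,h6e,h6f⟩,
    ⟨hab,hac,had,hae,haf⟩,
    ⟨hbc,hbd,hbe,hbf⟩,
    ⟨hcd,hce,hcf⟩,
    ⟨hde,hdf⟩, hef, -⟩ := hdist
  -- the two fundamental linear relations among lifts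
  obtain ⟨β, hβs, jβ, hjβ⟩ := dep_of_perp (k := 2) (m := 4) (by norm_num) (by norm_num)
    ![lf a, lf b] (lf_pair_indep hab)
    ![lf P₁, lf P₂, lf P₃, lf P₄]
    (by intro i j; fin_cases i <;> fin_cases j <;>
      simp [Bf_lf, haP1, haP2, haP3, haP4, hbP1, hbP2, hbP3, hbP4])
  have hβ : β 0 • lf P₁ + β 1 • lf P₂ + β 2 • lf P₃ + β 3 • lf P₄ = 0 := by
    simpa [Fin.sum_univ_four] using hβs
  obtain ⟨γ, hγs, jγ, hjγ⟩ := dep_of_perp (k := 2) (m := 4) (by norm_num) (by norm_num)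
    ![lf c, lf d] (lf_pair_indep hcd)
    ![lf P₁, lf P₂, lf P₅, lf P₆]
    (by intro i j; fin_cases i <;> fin_cases j <;>
      simp [Bf_lf, hcP1, hcP2, hcP5, hcP6, hdP1, hdP2, hdP5, hdP6])
  have hγ : γ 0 • lf P₁ + γ 1 • lf P₂ + γ 2 • lf P₅ + γ 3 • lf P₆ = 0 := by
    simpa [Fin.sum_univ_four] using hγs
  by_cases hγ3 : γ 3 = 0
  · -- degenerate: P₅ (or nothing) depends on P₁, P₂; everything lies on a null line
    by_cases hγ2 : γ 2 = 0
    · exfalso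
      rw [hγ2, hγ3, zero_smul, zero_smul, add_zero, add_zero] at hγ
      obtain ⟨z0, z1⟩ := pair_zero h12 hγ
      exact fin4_ex ⟨jγ, hjγ⟩ z0 z1 hγ2 hγ3
    · rw [hγ3, zero_smul, add_zero] at hγ
      have hL5 := solve3 hγ hγ2
      obtain ⟨h5ab, hsum, hnull⟩ := lift_affine hL5
      have hq12 : q (P₁ - P₂) = 0 := by
        rcases mul_eq_zero.mp hnull with hst | hq
        · exfalso
          rcases mul_eq_zero.mp hst with hs | ht
          · have ht1 : -(γ 1)/γ 2 = 1 := by rw [hs] at hsum; linarith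
            rw [hs, ht1, zero_smul, one_smul, zero_add] at h5ab
            exact h25 h5ab.symm
          · have hs1 : -(γ 0)/γ 2 = 1 := by rw [ht] at hsum; linarith
            rw [ht, hs1, zero_smul, one_smul, add_zero] at h5ab
            exact h15 h5ab.symm
        · exact hq
      -- set up the null line through P₁, P₂
      set n := P₂ - P₁ with hn_def
      have hqn : q n = 0 := by rw [hn_def, q_sub_comm]; exact hq12
      have hn0 : n ≠ 0 := by rw [hn_def]; exact sub_ne_zero.mpr (Ne.symm h12)
      have hP2n : P₁ + (1:ℝ) • n = P₂ := by rw [one_smul, hn_def]; abel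
      obtain ⟨ta, hta⟩ := on_line hqn hn0 one_ne_zero haP1 (by rw [hP2n]; exact haP2)
      obtain ⟨tb, htb⟩ := on_line hqn hn0 one_ne_zero hbP1 (by rw [hP2n]; exact hbP2)
      obtain ⟨tc, htc⟩ := on_line hqn hn0 one_ne_zero hcP1 (by rw [hP2n]; exact hcP2)
      obtain ⟨td, htd⟩ := on_line hqn hn0 one_ne_zero hdP1 (by rw [hP2n]; exact hdP2)
      have htba : tb - ta ≠ 0 := sub_ne_zero.mpr fun h => hab (by rw [hta, htb, h])
      have htdc : td - tc ≠ 0 := sub_ne_zero.mpr fun h => hcd (by rw [htc, htd, h])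
      have habn : a + (tb - ta) • n = b := by rw [hta, htb]; exact line_eq P₁ n (by ring)
      have hcdn : c + (td - tc) • n = d := by rw [htc, htd]; exact line_eq P₁ n (by ring)
      obtain ⟨u3, hu3⟩ := on_line hqn hn0 htba (by rw [q_sub_comm]; exact haP3)
        (by rw [habn, q_sub_comm]; exact hbP3)
      obtain ⟨u4, hu4⟩ := on_line hqn hn0 htba (by rw [q_sub_comm]; exact haP4)
        (by rw [habn, q_sub_comm]; exact hbP4)
      obtain ⟨u6, hu6⟩ := on_line hqn hn0 htdc (by rw [q_sub_comm]; exact hcP6)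
        (by rw [hcdn, q_sub_comm]; exact hdP6)
      have hP3 : P₃ = P₁ + (ta + u3) • n := by rw [hu3, hta]; exact line_eq P₁ n rfl
      have hP4 : P₄ = P₁ + (ta + u4) • n := by rw [hu4, hta]; exact line_eq P₁ n rfl
      have hP6 : P₆ = P₁ + (tc + u6) • n := by rw [hu6, htc]; exact line_eq P₁ n rfl
      have hr34 : (ta + u4) - (ta + u3) ≠ 0 :=
        sub_ne_zero.mpr fun h => h34 (by rw [hP3, hP4, ← h])
      have h34' : P₃ + ((ta + u4) - (ta + u3)) • n = P₄ := by
        rw [hP3, hP4]; exact line_eq P₁ n (by ring)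
      have h36' : P₃ + ((tc + u6) - (ta + u3)) • n = P₆ := by
        rw [hP3, hP6]; exact line_eq P₁ n (by ring)
      have := line_transfer hqn hr34 hfP3 (by rw [h34']; exact hfP4) ((tc + u6) - (ta + u3))
      rwa [h36'] at this
  · -- main case: γ 3 ≠ 0
    have hβ01 : ¬(β 0 = 0 ∧ β 1 = 0) := by
      rintro ⟨z0, z1⟩
      rw [z0, z1, zero_smul, zero_smul, zero_add, zero_add] at hβ
      obtain ⟨z2, z3⟩ := pair_zero h34 hβ
      exact fin4_ex ⟨jβ, hjβ⟩ z0 z1 z2 z3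
    have key : γ 0 * Bf (lf f) (lf P₁) + γ 1 * Bf (lf f) (lf P₂) = 0 := by
      have fβ : β 0 * Bf (lf f) (lf P₁) + β 1 * Bf (lf f) (lf P₂) = 0 := by
        have t1 := pair4 hβ (lf f)
        rw [bz hfP3, bz hfP4] at t1; linarith
      by_cases hdet : γ 0 * β 1 - γ 1 * β 0 = 0
      · -- (γ0, γ1) proportional to (β0, β1)
        by_cases hb0 : β 0 = 0
        · have hb1 : β 1 ≠ 0 := fun h => hβ01 ⟨hb0, h⟩
          have hγ0 : γ 0 = 0 := by
            have : γ 0 * β 1 = 0 := by rw [hb0] at hdet; linarith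
            exact (mul_eq_zero.mp this).resolve_right hb1
          have hBf2 : Bf (lf f) (lf P₂) = 0 := by
            rw [hb0] at fβ
            have : β 1 * Bf (lf f) (lf P₂) = 0 := by linarith
            exact (mul_eq_zero.mp this).resolve_left hb1
          rw [hγ0, hBf2]; ring
        · have h1 : β 0 * (γ 0 * Bf (lf f) (lf P₁) + γ 1 * Bf (lf f) (lf P₂))
              = γ 0 * (β 0 * Bf (lf f) (lf P₁) + β 1 * Bf (lf f) (lf P₂))
              - (γ 0 * β 1 - γ 1 * β 0) * Bf (lf f) (lf P₂) := by ring
          rw [fβ, hdet] at h1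
          simp only [mul_zero, zero_mul, sub_zero] at h1
          exact (mul_eq_zero.mp h1).resolve_left hb0
      · -- e is orthogonal to P₁ and P₂ as well
        have he12 : γ 0 * Bf (lf e) (lf P₁) + γ 1 * Bf (lf e) (lf P₂) = 0 := by
          have t1 := pair4 hγ (lf e)
          rw [bz heP5, bz heP6] at t1; linarith
        have eβ : β 0 * Bf (lf e) (lf P₁) + β 1 * Bf (lf e) (lf P₂) = 0 := by
          have t1 := pair4 hβ (lf e)
          rw [bz heP3, bz heP4] at t1; linarith
        have hBe1 : Bf (lf e) (lf P₁) = 0 := by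
          have h1 : (γ 0 * β 1 - γ 1 * β 0) * Bf (lf e) (lf P₁) = 0 := by
            linear_combination (β 1) * he12 - (γ 1) * eβ
          exact (mul_eq_zero.mp h1).resolve_left hdet
        have hBe2 : Bf (lf e) (lf P₂) = 0 := by
          have h1 : (γ 0 * β 1 - γ 1 * β 0) * Bf (lf e) (lf P₂) = 0 := by
            linear_combination (γ 0) * eβ - (β 0) * he12
          exact (mul_eq_zero.mp h1).resolve_left hdet
        have qe1 : q (e - P₁) = 0 := qz hBe1
        have qe2 : q (e - P₂) = 0 := qz hBe2
        by_cases hind : LinearIndependent ℝ ![lf a, lf b, lf e]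
        · -- P₃ and P₄ lie in the span of P₁, P₂
          obtain ⟨δ, hδs, jδ, hjδ⟩ := dep_of_perp (k := 3) (m := 3) (by norm_num) (by norm_num)
            ![lf a, lf b, lf e] hind ![lf P₁, lf P₂, lf P₃]
            (by intro i j; fin_cases i <;> fin_cases j <;>
              simp [Bf_lf, haP1, haP2, haP3, hbP1, hbP2, hbP3, qe1, qe2, heP3])
          have hδ : δ 0 • lf P₁ + δ 1 • lf P₂ + δ 2 • lf P₃ = 0 := by
            simpa [Fin.sum_univ_three] using hδs
          obtain ⟨ε, hεs, jε, hjε⟩ := dep_of_perp (k := 3) (m := 3) (by norm_num) (by norm_num)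
            ![lf a, lf b, lf e] hind ![lf P₁, lf P₂, lf P₄]
            (by intro i j; fin_cases i <;> fin_cases j <;>
              simp [Bf_lf, haP1, haP2, haP4, hbP1, hbP2, hbP4, qe1, qe2, heP4])
          have hε : ε 0 • lf P₁ + ε 1 • lf P₂ + ε 2 • lf P₄ = 0 := by
            simpa [Fin.sum_univ_three] using hεs
          have hδ2 : δ 2 ≠ 0 := by
            intro h2z
            rw [h2z, zero_smul, add_zero] at hδ
            obtain ⟨z0, z1⟩ := pair_zero h12 hδ
            exact fin3_ex ⟨jδ, hjδ⟩ z0 z1 h2z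
          have hε2 : ε 2 ≠ 0 := by
            intro h2z
            rw [h2z, zero_smul, add_zero] at hε
            obtain ⟨z0, z1⟩ := pair_zero h12 hε
            exact fin3_ex ⟨jε, hjε⟩ z0 z1 h2z
          have fδ : δ 0 * Bf (lf f) (lf P₁) + δ 1 * Bf (lf f) (lf P₂) = 0 := by
            have t1 := pair3 hδ (lf f); rw [bz hfP3] at t1; linarith
          have fε : ε 0 * Bf (lf f) (lf P₁) + ε 1 * Bf (lf f) (lf P₂) = 0 := by
            have t1 := pair3 hε (lf f); rw [bz hfP4] at t1; linarith
          by_cases hdet3 : δ 0 * ε 1 - δ 1 * ε 0 = 0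
          · exfalso
            have comb : (ε 1*δ 0 - δ 1*ε 0) • lf P₁ + (ε 1*δ 2) • lf P₃
                + (-(δ 1*ε 2)) • lf P₄ = 0 := by
              linear_combination (norm := module) (ε 1) • hδ - (δ 1) • hε
            have hc1 : ε 1 * δ 0 - δ 1 * ε 0 = 0 := by linear_combination hdet3
            rw [hc1, zero_smul, zero_add] at comb
            obtain ⟨w1, _⟩ := pair_zero h34 comb
            have hε1 : ε 1 = 0 := (mul_eq_zero.mp w1).resolve_right hδ2
            have comb2 : (ε 0*δ 1 - δ 0*ε 1) • lf P₂ + (ε 0*δ 2) • lf P₃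
                + (-(δ 0*ε 2)) • lf P₄ = 0 := by
              linear_combination (norm := module) (ε 0) • hδ - (δ 0) • hε
            have hc2 : ε 0 * δ 1 - δ 0 * ε 1 = 0 := by linear_combination (-1 : ℝ) * hdet3
            rw [hc2, zero_smul, zero_add] at comb2
            obtain ⟨w2, _⟩ := pair_zero h34 comb2
            have hε0 : ε 0 = 0 := (mul_eq_zero.mp w2).resolve_right hδ2
            rw [hε0, hε1, zero_smul, zero_smul, zero_add, zero_add] at hε
            have h4z : lf P₄ = 0 := (smul_eq_zero.mp hε).resolve_left hε2
            have := congrFun h4z 3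
            simp [lf] at this
          · have hBf1 : Bf (lf f) (lf P₁) = 0 := by
              have h1 : (δ 0 * ε 1 - δ 1 * ε 0) * Bf (lf f) (lf P₁) = 0 := by
                linear_combination (ε 1) * fδ - (δ 1) * fε
              exact (mul_eq_zero.mp h1).resolve_left hdet3
            have hBf2 : Bf (lf f) (lf P₂) = 0 := by
              have h1 : (δ 0 * ε 1 - δ 1 * ε 0) * Bf (lf f) (lf P₂) = 0 := by
                linear_combination (δ 0) * fε - (ε 0) * fδ
              exact (mul_eq_zero.mp h1).resolve_left hdet3
            rw [hBf1, hBf2]; ring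
        · -- a, b, e collinear on a null line containing P₁..P₄
          obtain ⟨g, hgs, hgex⟩ := Fintype.not_linearIndependent_iff.mp hind
          have hg : g 0 • lf a + g 1 • lf b + g 2 • lf e = 0 := by
            simpa [Fin.sum_univ_three] using hgs
          have hg2 : g 2 ≠ 0 := by
            intro h2z
            rw [h2z, zero_smul, add_zero] at hg
            obtain ⟨z0, z1⟩ := pair_zero hab hg
            exact fin3_ex hgex z0 z1 h2z
          have hE := solve3 hg hg2
          obtain ⟨heab, hsum, hnull⟩ := lift_affine hE
          have hqab : q (a - b) = 0 := by
            rcases mul_eq_zero.mp hnull with hst | hq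
            · exfalso
              rcases mul_eq_zero.mp hst with hs | ht
              · have ht1 : -(g 1)/g 2 = 1 := by rw [hs] at hsum; linarith
                rw [hs, ht1, zero_smul, one_smul, zero_add] at heab
                exact hbe heab.symm
              · have hs1 : -(g 0)/g 2 = 1 := by rw [ht] at hsum; linarith
                rw [ht, hs1, zero_smul, one_smul, add_zero] at heab
                exact hae heab.symm
            · exact hq
          set n := b - a with hn_def
          have hqn : q n = 0 := by rw [hn_def, q_sub_comm]; exact hqab
          have hn0 : n ≠ 0 := by rw [hn_def]; exact sub_ne_zero.mpr (Ne.symm hab)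
          have hbn : a + (1:ℝ) • n = b := by rw [one_smul, hn_def]; abel
          obtain ⟨t1, ht1⟩ := on_line hqn hn0 one_ne_zero
            (by rw [q_sub_comm]; exact haP1) (by rw [hbn, q_sub_comm]; exact hbP1)
          obtain ⟨t2, ht2⟩ := on_line hqn hn0 one_ne_zero
            (by rw [q_sub_comm]; exact haP2) (by rw [hbn, q_sub_comm]; exact hbP2)
          obtain ⟨t3, ht3⟩ := on_line hqn hn0 one_ne_zero
            (by rw [q_sub_comm]; exact haP3) (by rw [hbn, q_sub_comm]; exact hbP3)
          obtain ⟨t4, ht4⟩ := on_line hqn hn0 one_ne_zero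
            (by rw [q_sub_comm]; exact haP4) (by rw [hbn, q_sub_comm]; exact hbP4)
          have hr34 : t4 - t3 ≠ 0 := sub_ne_zero.mpr fun h => h34 (by rw [ht3, ht4, h])
          have h34' : P₃ + (t4 - t3) • n = P₄ := by
            rw [ht3, ht4]; exact line_eq a n (by ring)
          have h31' : P₃ + (t1 - t3) • n = P₁ := by
            rw [ht3, ht1]; exact line_eq a n (by ring)
          have h32' : P₃ + (t2 - t3) • n = P₂ := by
            rw [ht3, ht2]; exact line_eq a n (by ring)
          have hqf1 : q (f - P₁) = 0 := by
            have := line_transfer hqn hr34 hfP3 (by rw [h34']; exact hfP4) (t1 - t3)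
            rwa [h31'] at this
          have hqf2 : q (f - P₂) = 0 := by
            have := line_transfer hqn hr34 hfP3 (by rw [h34']; exact hfP4) (t2 - t3)
            rwa [h32'] at this
          rw [bz hqf1, bz hqf2]; ring
    apply qz
    have star := pair4 hγ (lf f)
    rw [bz hfP5] at star
    have hX : γ 3 * Bf (lf f) (lf P₆) = 0 := by linarith
    exact (mul_eq_zero.mp hX).resolve_left hγ3
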